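/- Let p ≥ 3 and let G be a finite connected simple graph that contains no induced subgraph isomorphic to P5 (the path on 5 vertices) and no induced subgraph isomorphic to K_p − e (the complete graph on p vertices minus one edge), and suppose G has no clique separator. Let Q be a maximum clique of G. Then either G contains no independent set of three vertices, or |Q| ≤ (p+1)^{p+2}·(p−2). -/

import Mathlib

/-- The complete graph on `p` vertices minus one edge (the edge between `0` and `1`). -/
def completeMinusEdge (p : ℕ) : SimpleGraph (Fin p) :=
  SimpleGraph.fromRel
    (fun a b => ¬(a.val = 0 ∧ b.val = 1) ∧ ¬(a.val = 1 ∧ b.val = 0))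

/-- `G` is `H`-free: no induced subgraph of `G` is isomorphic to `H`
(equivalently, there is no graph embedding of `H` into `G`). -/
def IsFree {V W : Type*} (G : SimpleGraph V) (H : SimpleGraph W) : Prop :=
  ¬ Nonempty (H ↪g G)

/-- `G` has a clique separator: a clique `Q` such that the remaining vertices split into
two nonempty sets with no edges between them. -/
def HasCliqueSeparator {V : Type*} (G : SimpleGraph V) : Prop :=
  ∃ Q A B : Set V, G.IsClique Q ∧ A.Nonempty ∧ B.Nonempty ∧ Disjoint A B ∧
    A ∪ B = Qᶜ ∧ ∀ a ∈ A, ∀ b ∈ B, ¬ G.Adj a b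



lemma arith1 {p : ℕ} (hp : 3 ≤ p) : 7 * p ^ 3 ≤ (p + 1) ^ (p + 2) * (p - 2) := by
  have h0 : 9 ≤ p ^ 2 := by nlinarith
  have h1 : 7 * p ^ 3 ≤ p ^ 2 * p ^ 3 := Nat.mul_le_mul_right _ (by omega)
  have h1' : p ^ 2 * p ^ 3 = p ^ 5 := by ring
  have h2 : p ^ 5 ≤ (p + 1) ^ 5 := Nat.pow_le_pow_left (by omega) 5
  have h3 : (p + 1) ^ 5 ≤ (p + 1) ^ (p + 2) := Nat.pow_le_pow_right (by omega) (by omega)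
  have h4 : (p + 1) ^ (p + 2) ≤ (p + 1) ^ (p + 2) * (p - 2) :=
    Nat.le_mul_of_pos_right _ (by omega)
  omega

lemma arith2 {p m : ℕ} (hm : m + 3 = p) : 3 * m + 1 ≤ 7 * p ^ 3 := by
  subst hm
  have h : (m + 3) ^ 3 = m^3 + 9*m^2 + 27*m + 27 := by ring
  rw [h]; nlinarith

lemma arith3 {p m : ℕ} (hm : m + 3 = p) :
    (2 * m ^ 2 + m + 4) * (2 * m + 1) + 2 * m + 1 ≤ 7 * p ^ 3 := by
  subst hm
  have h : 7 * (m + 3) ^ 3 = 7*m^3 + 63*m^2 + 189*m + 189 := by ring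
  have h2 : (2 * m ^ 2 + m + 4) * (2 * m + 1) + 2 * m + 1 = 4*m^3 + 4*m^2 + 11*m + 5 := by ring
  rw [h, h2]; nlinarith


/-- Restriction of a graph to a set of vertices (keeping the same vertex type). -/
def restrictG {V : Type*} (G : SimpleGraph V) (s : Set V) : SimpleGraph V where
  Adj x y := G.Adj x y ∧ x ∈ s ∧ y ∈ s
  symm := ⟨fun x y ⟨h, hx, hy⟩ => ⟨h.symm, hy, hx⟩⟩
  loopless := ⟨fun x ⟨h, _, _⟩ => G.loopless.irrefl x h⟩


section Helpers
variable {V : Type*} {G : SimpleGraph V} {H : SimpleGraph V}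

lemma noP5 (hP5 : IsFree G (SimpleGraph.pathGraph 5))
    {v0 v1 v2 v3 v4 : V}
    (a01 : G.Adj v0 v1) (a12 : G.Adj v1 v2) (a23 : G.Adj v2 v3) (a34 : G.Adj v3 v4)
    (n02 : ¬ G.Adj v0 v2) (n03 : ¬ G.Adj v0 v3) (n04 : ¬ G.Adj v0 v4)
    (n13 : ¬ G.Adj v1 v3) (n14 : ¬ G.Adj v1 v4) (n24 : ¬ G.Adj v2 v4)
    (d02 : v0 ≠ v2) (d03 : v0 ≠ v3) (d04 : v0 ≠ v4) (d13 : v1 ≠ v3) (d14 : v1 ≠ v4)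
    (d24 : v2 ≠ v4) : False := by
  apply hP5
  refine ⟨⟨⟨![v0, v1, v2, v3, v4], ?_⟩, ?_⟩⟩
  · intro i j hij
    fin_cases i <;> fin_cases j <;>
      first
        | rfl
        | (exfalso; simp only [Matrix.cons_val_zero, Matrix.cons_val_one, Matrix.head_cons,
            Matrix.cons_val_two, Matrix.tail_cons, Matrix.cons_val_three,
            Matrix.cons_val_four] at hij;
           first
             | exact d02 hij | exact d03 hij | exact d04 hij | exact d13 hij
             | exact d14 hij | exact d24 hij | exact d02 hij.symm | exact d03 hij.symm
             | exact d04 hij.symm | exact d13 hij.symm | exact d14 hij.symm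
             | exact d24 hij.symm
             | exact a01.ne hij | exact a12.ne hij | exact a23.ne hij | exact a34.ne hij
             | exact a01.ne hij.symm | exact a12.ne hij.symm | exact a23.ne hij.symm
             | exact a34.ne hij.symm)
  · intro i j
    fin_cases i <;> fin_cases j <;>
      simp only [SimpleGraph.pathGraph_adj, Function.Embedding.coeFn_mk,
        Matrix.cons_val_zero, Matrix.cons_val_one, Matrix.head_cons,
        Matrix.cons_val_two, Matrix.tail_cons, Matrix.cons_val_three, Matrix.cons_val_four,
        Fin.val_zero, Fin.val_one, Fin.val_two] <;>
      (try simp [G.irrefl]) <;>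
      first
        | exact a01 | exact a12 | exact a23 | exact a34
        | exact a01.symm | exact a12.symm | exact a23.symm | exact a34.symm
        | exact n02 | exact n03 | exact n04 | exact n13 | exact n14 | exact n24
        | exact fun h => n02 h.symm | exact fun h => n03 h.symm | exact fun h => n04 h.symm
        | exact fun h => n13 h.symm | exact fun h => n14 h.symm | exact fun h => n24 h.symm


lemma cme_adj {p : ℕ} {a b : Fin p} :
    (completeMinusEdge p).Adj a b ↔ a ≠ b ∧ ¬((a.val = 0 ∧ b.val = 1) ∨ (a.val = 1 ∧ b.val = 0)) := by
  simp only [completeMinusEdge, SimpleGraph.fromRel_adj]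
  tauto

lemma noKpe {p : ℕ} (hp : 3 ≤ p) (hKpe : IsFree G (completeMinusEdge p))
    {x y : V} (K : Finset V) (hcard : K.card = p - 2)
    (hcl : ∀ u ∈ K, ∀ v ∈ K, u ≠ v → G.Adj u v)
    (hx : ∀ u ∈ K, G.Adj x u) (hy : ∀ u ∈ K, G.Adj y u)
    (hxy : ¬ G.Adj x y) (hne : x ≠ y) : False := by
  classical
  have hxK : x ∉ K := fun h => hxy ((hy x h).symm)
  have hyK : y ∉ K := fun h => hxy (hx y h)
  let e : Fin (p - 2) → V := fun i => ((K.equivFinOfCardEq hcard).symm i : K)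
  have heK : ∀ i, e i ∈ K := fun i => ((K.equivFinOfCardEq hcard).symm i).2
  have heinj : Function.Injective e := fun i j hij => by
    have := Subtype.ext hij
    exact (K.equivFinOfCardEq hcard).symm.injective this
  let f : Fin p → V := fun i =>
    if h0 : i.val = 0 then x else if h1 : i.val = 1 then y else
      e ⟨i.val - 2, by omega⟩
  have hfval : ∀ i : Fin p, (i.val = 0 ∧ f i = x) ∨ (i.val = 1 ∧ f i = y) ∨
      (2 ≤ i.val ∧ f i ∈ K ∧ ∀ j : Fin p, 2 ≤ j.val → i ≠ j → f i ≠ f j) := by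
    intro i
    by_cases h0 : i.val = 0
    · exact Or.inl ⟨h0, by simp [f, h0]⟩
    by_cases h1 : i.val = 1
    · exact Or.inr (Or.inl ⟨h1, by simp [f, h0, h1]⟩)
    · refine Or.inr (Or.inr ⟨by omega, ?_, ?_⟩)
      · simp only [f, h0, h1, dif_neg, not_false_iff]
        exact heK _
      · intro j hj hij
        have hj0 : ¬ j.val = 0 := by omega
        have hj1 : ¬ j.val = 1 := by omega
        simp only [f, h0, h1, hj0, hj1, dif_neg, not_false_iff]
        intro hcon
        apply hij
        have := heinj hcon
        have : i.val - 2 = j.val - 2 := congrArg Fin.val this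
        exact Fin.ext (by omega)
  have hfx : ∀ i : Fin p, i.val = 0 → f i = x := by
    intro i h; rcases hfval i with ⟨_, h'⟩|⟨h', _⟩|⟨h', _⟩ <;> first | exact h' | omega
  have hfy : ∀ i : Fin p, i.val = 1 → f i = y := by
    intro i h; rcases hfval i with ⟨h', _⟩|⟨_, h'⟩|⟨h', _⟩ <;> first | exact h' | omega
  have hfK : ∀ i : Fin p, 2 ≤ i.val → f i ∈ K := by
    intro i h; rcases hfval i with ⟨h', _⟩|⟨h', _⟩|⟨_, h', _⟩ <;> first | exact h' | omega
  have hinj : Function.Injective f := by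
    intro i j hij
    by_contra hcon
    rcases hfval i with ⟨hi, hi'⟩|⟨hi, hi'⟩|⟨hi, hi', hi''⟩ <;>
      rcases hfval j with ⟨hj, hj'⟩|⟨hj, hj'⟩|⟨hj, hj', _⟩
    · exact hcon (Fin.ext (by omega))
    · exact hne (by rw [← hi', ← hj']; exact hij)
    · exact hxK (by rw [← hi', hij]; exact hj')
    · exact hne (by rw [← hi', ← hj']; exact hij.symm)
    · exact hcon (Fin.ext (by omega))
    · exact hyK (by rw [← hi', hij]; exact hj')
    · exact hxK (by rw [← hj', ← hij]; exact hi')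
    · exact hyK (by rw [← hj', ← hij]; exact hi')
    · exact hi'' j hj hcon hij
  apply hKpe
  refine ⟨⟨⟨f, hinj⟩, ?_⟩⟩
  intro i j
  rw [cme_adj]
  simp only [Function.Embedding.coeFn_mk]
  constructor
  · intro hadj
    refine ⟨fun h => G.loopless.irrefl _ (h ▸ hadj), ?_⟩
    rintro (⟨hi0, hj1⟩|⟨hi1, hj0⟩)
    · exact hxy (by rw [← hfx i hi0, ← hfy j hj1]; exact hadj)
    · exact hxy (by rw [← hfx j hj0, ← hfy i hi1]; exact hadj.symm)
  · rintro ⟨hij, hnot⟩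
    rcases hfval i with ⟨hi, hi'⟩|⟨hi, hi'⟩|⟨hi, hi', _⟩ <;>
      rcases hfval j with ⟨hj, hj'⟩|⟨hj, hj'⟩|⟨hj, hj', _⟩
    · exact absurd (Fin.ext (hi.trans hj.symm)) hij
    · exact absurd (Or.inl ⟨hi, hj⟩) hnot
    · rw [hi']; exact hx _ hj'
    · exact absurd (Or.inr ⟨hi, hj⟩) hnot
    · exact absurd (Fin.ext (hi.trans hj.symm)) hij
    · rw [hi']; exact hy _ hj'
    · rw [hj']; exact (hx _ hi').symm
    · rw [hj']; exact (hy _ hi').symm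
    · refine hcl _ hi' _ hj' (fun h => hij ?_)
      by_contra hne'
      rcases hfval i with ⟨h2, _⟩|⟨h2, _⟩|⟨_, _, hi''⟩
      · omega
      · omega
      · exact hi'' j hj (fun hh => hne' hh) h

lemma walk_seg : ∀ {x y : V} (w : H.Walk x y) (i j : ℕ), i ≤ j → j ≤ w.length →
    ∃ w' : H.Walk (w.getVert i) (w.getVert j), w'.length = j - i := by
  intro x y w
  induction w with
  | nil =>
    intro i j hij hj
    simp only [SimpleGraph.Walk.length_nil, Nat.le_zero] at hj
    subst hj
    simp only [Nat.le_zero] at hij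
    subst hij
    exact ⟨SimpleGraph.Walk.nil, rfl⟩
  | @cons u v z h w ih =>
    intro i j hij hj
    rcases i with _ | i
    · rcases j with _ | j
      · exact ⟨SimpleGraph.Walk.nil, rfl⟩
      · obtain ⟨w', hw'⟩ := ih 0 j (Nat.zero_le _) (by simpa [SimpleGraph.Walk.length_cons] using hj)
        refine ⟨(SimpleGraph.Walk.cons h (w'.copy (w.getVert_zero) rfl)).copy
          ((SimpleGraph.Walk.cons h w).getVert_zero).symm
          (SimpleGraph.Walk.getVert_cons_succ w h).symm, ?_⟩
        simp only [SimpleGraph.Walk.length_copy, SimpleGraph.Walk.length_cons, hw']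
        omega
    · rcases j with _ | j
      · omega
      · obtain ⟨w', hw'⟩ := ih i j (by omega) (by simpa [SimpleGraph.Walk.length_cons] using hj)
        rw [SimpleGraph.Walk.getVert_cons_succ, SimpleGraph.Walk.getVert_cons_succ]
        exact ⟨w', by omega⟩

lemma geodesic_gap {x y : V} (w : H.Walk x y) (hw : w.length = H.dist x y)
    {i j : ℕ} (hij : i + 2 ≤ j) (hj : j ≤ w.length) :
    ¬ H.Adj (w.getVert i) (w.getVert j) ∧ w.getVert i ≠ w.getVert j := by
  obtain ⟨w1, hw1⟩ := walk_seg w 0 i (Nat.zero_le _) (by omega)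
  obtain ⟨w2, hw2⟩ := walk_seg w j w.length (by omega) le_rfl
  let w1' := w1.copy (w.getVert_zero) rfl
  have hw1' : w1'.length = i := by simp [w1', SimpleGraph.Walk.length_copy]; omega
  let w2' := w2.copy rfl (w.getVert_length)
  have hw2' : w2'.length = w.length - j := by simp [w2', SimpleGraph.Walk.length_copy, hw2]
  constructor
  · intro hadj
    have hle := SimpleGraph.dist_le (w1'.append (SimpleGraph.Walk.cons hadj w2'))
    rw [SimpleGraph.Walk.length_append, SimpleGraph.Walk.length_cons, ← hw] at hle
    omega
  · intro heq
    have hle := SimpleGraph.dist_le (w1'.append (w2'.copy heq.symm rfl))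
    rw [SimpleGraph.Walk.length_append, ← hw] at hle
    have hcpy : (w2'.copy heq.symm rfl).length = w2'.length := SimpleGraph.Walk.length_copy _ _ _
    omega



lemma escape (hP5 : IsFree G (SimpleGraph.pathGraph 5))
    (hnosep : ¬ HasCliqueSeparator G) (Q : Finset V) (hQ : G.IsClique (Q : Set V))
    {a : V} (ha : a ∉ Q) {u : V} (hu : u ∈ Q) (hua : ¬ G.Adj u a) :
    (∃ s, s ∉ Q ∧ G.Adj s u ∧ G.Adj s a) ∨
    (∃ s t, s ∉ Q ∧ t ∉ Q ∧ G.Adj u s ∧ G.Adj s t ∧ G.Adj t a ∧ ¬ G.Adj u t ∧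
      ¬ G.Adj s a ∧ s ≠ a) := by
  classical
  -- every vertex of Q has a neighbor outside Q
  have hnb : ∃ v, v ∉ Q ∧ G.Adj u v := by
    by_contra hcon
    push_neg at hcon
    apply hnosep
    refine ⟨(Q : Set V) \ {u}, {u}, (↑Q)ᶜ, hQ.subset Set.diff_subset, ⟨u, rfl⟩,
      ⟨a, by simpa using ha⟩, ?_, ?_, ?_⟩
    · simp only [Set.disjoint_singleton_left, Set.mem_compl_iff, Finset.mem_coe, not_not]
      exact hu
    · ext w
      simp only [Set.mem_union, Set.mem_singleton_iff, Set.mem_compl_iff, Set.mem_diff,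
        Finset.mem_coe]
      constructor
      · rintro (rfl | hw)
        · intro hcon2; exact hcon2.2 rfl
        · intro hcon2; exact hw hcon2.1
      · intro hw
        by_cases hwu : w = u
        · exact Or.inl hwu
        · exact Or.inr (fun hwQ => hw ⟨hwQ, hwu⟩)
    · rintro x rfl b hb hadj
      exact hcon b (by simpa using hb) hadj
  -- the outside of Q is connected
  have hout : ∀ x, x ∉ Q → (restrictG G {w | w ∉ Q}).Reachable a x := by
    intro x hx
    by_contra hcon
    apply hnosep
    refine ⟨(Q : Set V), {w | w ∉ Q ∧ (restrictG G {w | w ∉ Q}).Reachable a w},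
      {w | w ∉ Q ∧ ¬ (restrictG G {w | w ∉ Q}).Reachable a w}, hQ,
      ⟨a, ha, SimpleGraph.Reachable.refl a⟩, ⟨x, hx, hcon⟩, ?_, ?_, ?_⟩
    · rw [Set.disjoint_left]
      rintro w ⟨_, hw⟩ ⟨_, hw'⟩
      exact hw' hw
    · ext w
      simp only [Set.mem_union, Set.mem_setOf_eq, Set.mem_compl_iff, Finset.mem_coe]
      constructor
      · rintro (⟨h1, _⟩ | ⟨h1, _⟩) <;> exact h1
      · intro hw
        by_cases hr : (restrictG G {w | w ∉ Q}).Reachable a w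
        · exact Or.inl ⟨hw, hr⟩
        · exact Or.inr ⟨hw, hr⟩
    · rintro w1 ⟨hw1, hr1⟩ w2 ⟨hw2, hr2⟩ hadj
      exact hr2 (hr1.trans (SimpleGraph.Adj.reachable ⟨hadj, hw1, hw2⟩))
  -- the graph on {u} ∪ Qᶜ
  set s : Set V := {w | w = u ∨ w ∉ Q} with hs
  set G' : SimpleGraph V := restrictG G s with hG'
  have hus : u ∈ s := Or.inl rfl
  have has : a ∈ s := Or.inr ha
  have hmono : restrictG G {w | w ∉ Q} ≤ G' := by
    intro x y hxy
    exact ⟨hxy.1, Or.inr hxy.2.1, Or.inr hxy.2.2⟩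
  have hreach : G'.Reachable u a := by
    obtain ⟨v, hvQ, huv⟩ := hnb
    have h1 : G'.Adj u v := ⟨huv, hus, Or.inr hvQ⟩
    exact (SimpleGraph.Adj.reachable h1).trans ((hout v hvQ).mono hmono).symm
  obtain ⟨w, hwlen⟩ := hreach.exists_walk_length_eq_dist
  set d := G'.dist u a with hd
  have hd2 : 2 ≤ d := by
    rcases Nat.lt_or_ge d 2 with h | h
    · interval_cases d
      · exfalso
        have := SimpleGraph.Walk.eq_of_length_eq_zero (by omega : w.length = 0)
        exact ha (this ▸ hu)
      · exfalso
        have hadj := w.adj_getVert_succ (by omega : 0 < w.length)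
        rw [SimpleGraph.Walk.getVert_zero] at hadj
        have : w.getVert 1 = a := by
          have := w.getVert_length
          rwa [show w.length = 1 by omega] at this
        rw [this] at hadj
        exact hua hadj.1
    · exact h
  -- membership of walk vertices in s
  have hmem : ∀ i, i ≤ w.length → w.getVert i ∈ s := by
    intro i hi
    rcases Nat.eq_zero_or_pos i with rfl | hpos
    · rw [SimpleGraph.Walk.getVert_zero]; exact hus
    · have hadj := w.adj_getVert_succ (by omega : i - 1 < w.length)
      rw [show i - 1 + 1 = i by omega] at hadj
      exact hadj.2.2
  by_cases hd4 : 4 ≤ d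
  · -- induced P5: contradiction
    exfalso
    have hlen : w.length = d := by rw [hwlen]
    set v0 := w.getVert 0
    set v1 := w.getVert 1
    set v2 := w.getVert 2
    set v3 := w.getVert 3
    set v4 := w.getVert 4
    have hadj01 := w.adj_getVert_succ (by omega : 0 < w.length)
    have hadj12 := w.adj_getVert_succ (by omega : 1 < w.length)
    have hadj23 := w.adj_getVert_succ (by omega : 2 < w.length)
    have hadj34 := w.adj_getVert_succ (by omega : 3 < w.length)
    have hgap : ∀ i j, i + 2 ≤ j → j ≤ 4 →
        ¬ G.Adj (w.getVert i) (w.getVert j) ∧ w.getVert i ≠ w.getVert j := by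
      intro i j hij hj4
      have := geodesic_gap w (by rw [hwlen]) hij (by omega)
      exact ⟨fun hadj => this.1 ⟨hadj, hmem i (by omega), hmem j (by omega)⟩, this.2⟩
    exact noP5 hP5 hadj01.1 hadj12.1 hadj23.1 hadj34.1
      (hgap 0 2 (by omega) (by omega)).1 (hgap 0 3 (by omega) (by omega)).1
      (hgap 0 4 (by omega) (by omega)).1 (hgap 1 3 (by omega) (by omega)).1
      (hgap 1 4 (by omega) (by omega)).1 (hgap 2 4 (by omega) (by omega)).1
      (hgap 0 2 (by omega) (by omega)).2 (hgap 0 3 (by omega) (by omega)).2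
      (hgap 0 4 (by omega) (by omega)).2 (hgap 1 3 (by omega) (by omega)).2
      (hgap 1 4 (by omega) (by omega)).2 (hgap 2 4 (by omega) (by omega)).2
  · -- d = 2 or 3
    have hlen : w.length = d := by rw [hwlen]
    have hadj01 := w.adj_getVert_succ (by omega : 0 < w.length)
    rw [SimpleGraph.Walk.getVert_zero] at hadj01
    set s1 := w.getVert 1 with hs1
    have hs1Q : s1 ∉ Q := by
      rcases hadj01.2.2 with h | h
      · exact absurd (h ▸ rfl) hadj01.ne'
      · exact h
    by_cases hd2' : d = 2
    · left
      have hadj12 := w.adj_getVert_succ (by omega : 1 < w.length)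
      have hv2 : w.getVert 2 = a := by
        have := w.getVert_length
        rwa [show w.length = 2 by omega] at this
      rw [hv2] at hadj12
      exact ⟨s1, hs1Q, hadj01.1.symm, hadj12.1⟩
    · -- d = 3
      have hd3 : d = 3 := by omega
      right
      have hadj12 := w.adj_getVert_succ (by omega : 1 < w.length)
      have hadj23 := w.adj_getVert_succ (by omega : 2 < w.length)
      set t := w.getVert 2 with ht
      have hv3 : w.getVert 3 = a := by
        have := w.getVert_length
        rwa [show w.length = 3 by omega] at this
      rw [hv3] at hadj23
      have htu : t ≠ u := by
        intro heq
        have : G'.Adj u a := heq ▸ hadj23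
        have hle := SimpleGraph.dist_le (SimpleGraph.Walk.cons this SimpleGraph.Walk.nil)
        simp at hle
        omega
      have htQ : t ∉ Q := by
        rcases hadj12.2.2 with h | h
        · exact absurd h htu
        · exact h
      have hut : ¬ G.Adj u t := by
        intro hadj
        have h1 : G'.Adj u t := ⟨hadj, hus, Or.inr htQ⟩
        have hle := SimpleGraph.dist_le
          (SimpleGraph.Walk.cons h1 (SimpleGraph.Walk.cons hadj23 SimpleGraph.Walk.nil))
        simp at hle
        omega
      have hsa : ¬ G.Adj s1 a := by
        intro hadj
        have h1 : G'.Adj s1 a := ⟨hadj, Or.inr hs1Q, has⟩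
        have hle := SimpleGraph.dist_le
          (SimpleGraph.Walk.cons hadj01 (SimpleGraph.Walk.cons h1 SimpleGraph.Walk.nil))
        simp at hle
        omega
      have hs1a : s1 ≠ a := by
        intro heq
        exact hua (heq ▸ hadj01).1
      exact ⟨s1, t, hs1Q, htQ, hadj01.1, hadj12.1, hadj23.1, hut, hsa, hs1a⟩


end Helpers

/-- Let `p ≥ 3` and let `G` be a connected `{P₅, Kₚ − e}`-free graph
without clique separators, with maximum clique `Q`. Then `G` has no independent set of
three vertices, or `|Q| ≤ (p+1)^(p+2) * (p−2)`. -/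
theorem maxClique_bound_of_P5_Kpe_free
    {V : Type*} [Fintype V] (G : SimpleGraph V) (p : ℕ) (hp : 3 ≤ p)
    (hconn : G.Connected)
    (hP5 : IsFree G (SimpleGraph.pathGraph 5))
    (hKpe : IsFree G (completeMinusEdge p))
    (hnosep : ¬ HasCliqueSeparator G)
    (Q : Finset V) (hQ : G.IsClique (Q : Set V))
    (hQmax : ∀ C : Finset V, G.IsClique (C : Set V) → C.card ≤ Q.card) :
    (¬ ∃ S : Finset V, S.card = 3 ∧ ∀ u ∈ S, ∀ v ∈ S, u ≠ v → ¬ G.Adj u v) ∨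
      Q.card ≤ (p + 1) ^ (p + 2) * (p - 2) := by
  classical
  by_cases hS : ∃ S : Finset V, S.card = 3 ∧ ∀ u ∈ S, ∀ v ∈ S, u ≠ v → ¬ G.Adj u v
  swap
  · exact Or.inl hS
  right
  by_contra hbig
  push_neg at hbig
  set m : ℕ := p - 3 with hmdef
  have hm : m + 3 = p := by omega
  have hbig7 : 7 * p ^ 3 < Q.card := lt_of_le_of_lt (arith1 hp) hbig
  -- extract two nonadjacent vertices outside Q
  obtain ⟨S, hS3, hSind⟩ := hS
  have hQS : (S.filter (fun x => x ∈ Q)).card ≤ 1 := by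
    rw [Finset.card_le_one]
    intro x hx y hy
    by_contra hxy
    have hx' := Finset.mem_filter.mp hx
    have hy' := Finset.mem_filter.mp hy
    exact hSind x hx'.1 y hy'.1 hxy
      (hQ (Finset.mem_coe.mpr hx'.2) (Finset.mem_coe.mpr hy'.2) hxy)
  have hsplit := Finset.card_filter_add_card_filter_not (s := S)
    (p := fun x => x ∈ Q)
  have h2T : 1 < (S.filter (fun x => ¬ x ∈ Q)).card := by omega
  obtain ⟨a, haT, b, hbT, hne_ab⟩ := Finset.one_lt_card.mp h2T
  have haS : a ∈ S := Finset.mem_of_mem_filter _ haT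
  have hbS : b ∈ S := Finset.mem_of_mem_filter _ hbT
  have haQ : a ∉ Q := (Finset.mem_filter.mp haT).2
  have hbQ : b ∉ Q := (Finset.mem_filter.mp hbT).2
  have hab : ¬ G.Adj a b := hSind a haS b hbS hne_ab
  -- degree bound into Q
  have hdeg : ∀ v, v ∉ Q → (Q.filter (fun x => G.Adj v x)).card ≤ m := by
    intro v hv
    by_contra hcon
    push_neg at hcon
    have hvu : ∃ u0 ∈ Q, ¬ G.Adj v u0 := by
      by_contra hall
      push_neg at hall
      have hclique : G.IsClique ((insert v Q : Finset V) : Set V) := by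
        rw [Finset.coe_insert]
        exact hQ.insert (fun y hy hne => hall y hy)
      have := hQmax _ hclique
      rw [Finset.card_insert_of_notMem hv] at this
      omega
    obtain ⟨u0, hu0Q, hu0⟩ := hvu
    obtain ⟨K, hKsub, hKcard⟩ := Finset.exists_subset_card_eq
      (s := Q.filter (fun x => G.Adj v x)) (n := p - 2) (by omega)
    refine noKpe hp hKpe K hKcard ?_ ?_ ?_ hu0 (fun h => hv (h ▸ hu0Q))
    · intro x hx y hy hxy
      have hx' := Finset.mem_filter.mp (hKsub hx)
      have hy' := Finset.mem_filter.mp (hKsub hy)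
      exact hQ (Finset.mem_coe.mpr hx'.1) (Finset.mem_coe.mpr hy'.1) hxy
    · intro x hx
      exact (Finset.mem_filter.mp (hKsub hx)).2
    · intro x hx
      have hx' := Finset.mem_filter.mp (hKsub hx)
      have hxu0 : u0 ≠ x := fun h => hu0 (h ▸ hx'.2)
      exact hQ (Finset.mem_coe.mpr hu0Q) (Finset.mem_coe.mpr hx'.1) hxu0
  -- type-3 escape forces a small clique
  have type3bound : ∀ c : V, c ∉ Q →
      (∃ u ∈ Q, ∃ s t, s ∉ Q ∧ t ∉ Q ∧ G.Adj u s ∧ G.Adj s t ∧ G.Adj t c ∧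
        ¬ G.Adj u t ∧ ¬ G.Adj u c ∧ ¬ G.Adj s c ∧ s ≠ c) → False := by
    rintro c hcQ ⟨u, huQ, s, t, hsQ, htQ, hus, hst, htc, hut, huc, hsc, hsc'⟩
    have hsub : Q ⊆ insert u ((Q.filter (fun x => G.Adj c x)) ∪
        ((Q.filter (fun x => G.Adj s x)) ∪ (Q.filter (fun x => G.Adj t x)))) := by
      intro u' hu'
      by_contra hu'n
      simp only [Finset.mem_insert, Finset.mem_union, Finset.mem_filter, not_or] at hu'n
      push_neg at hu'n
      obtain ⟨hu'u, hu'c, hu's, hu't⟩ := hu'n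
      exact noP5 hP5
        (hQ (Finset.mem_coe.mpr hu') (Finset.mem_coe.mpr huQ) hu'u) hus hst htc
        (fun h => (hu's hu') h.symm) (fun h => (hu't hu') h.symm)
        (fun h => (hu'c hu') h.symm) hut huc hsc
        (fun h => hsQ (h ▸ hu')) (fun h => htQ (h ▸ hu')) (fun h => hcQ (h ▸ hu'))
        (fun h => htQ (h ▸ huQ)) (fun h => hcQ (h ▸ huQ)) hsc'
    have hle := Finset.card_le_card hsub
    have h1 := Finset.card_insert_le u ((Q.filter (fun x => G.Adj c x)) ∪
        ((Q.filter (fun x => G.Adj s x)) ∪ (Q.filter (fun x => G.Adj t x))))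
    have h2 := Finset.card_union_le (Q.filter (fun x => G.Adj c x))
        ((Q.filter (fun x => G.Adj s x)) ∪ (Q.filter (fun x => G.Adj t x)))
    have h3 := Finset.card_union_le (Q.filter (fun x => G.Adj s x))
        (Q.filter (fun x => G.Adj t x))
    have hdc := hdeg c hcQ
    have hds := hdeg s hsQ
    have hdt := hdeg t htQ
    have := arith2 (p := p) (m := m) hm
    omega
  -- every vertex of Q nonadjacent to a (resp. b) has a common neighbor with it
  have hsigma : ∀ u ∈ Q, ¬ G.Adj a u → ∃ s, s ∉ Q ∧ G.Adj s u ∧ G.Adj s a := by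
    intro u huQ hau
    rcases escape hP5 hnosep Q hQ haQ huQ (fun h => hau h.symm) with h | h
    · exact h
    · obtain ⟨s, t, h1, h2, h3, h4, h5, h6, h7, h8⟩ := h
      exact absurd ⟨u, huQ, s, t, h1, h2, h3, h4, h5, h6, fun hh => hau hh.symm, h7, h8⟩
        (fun hcon => type3bound a haQ hcon)
  have htau : ∀ u ∈ Q, ¬ G.Adj b u → ∃ t, t ∉ Q ∧ G.Adj t u ∧ G.Adj t b := by
    intro u huQ hbu
    rcases escape hP5 hnosep Q hQ hbQ huQ (fun h => hbu h.symm) with h | h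
    · exact h
    · obtain ⟨s, t, h1, h2, h3, h4, h5, h6, h7, h8⟩ := h
      exact absurd ⟨u, huQ, s, t, h1, h2, h3, h4, h5, h6, fun hh => hbu hh.symm, h7, h8⟩
        (fun hcon => type3bound b hbQ hcon)
  -- the part of Q away from a and b
  set Qs : Finset V := Q.filter (fun u => ¬ G.Adj a u ∧ ¬ G.Adj b u) with hQsdef
  have hQscard : Q.card ≤ Qs.card + 2 * m := by
    have hsub : Q ⊆ Qs ∪ ((Q.filter (fun x => G.Adj a x)) ∪ (Q.filter (fun x => G.Adj b x))) := by
      intro u hu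
      by_cases h1 : G.Adj a u
      · exact Finset.mem_union_right _ (Finset.mem_union_left _ (Finset.mem_filter.mpr ⟨hu, h1⟩))
      by_cases h2 : G.Adj b u
      · exact Finset.mem_union_right _ (Finset.mem_union_right _ (Finset.mem_filter.mpr ⟨hu, h2⟩))
      · exact Finset.mem_union_left _ (Finset.mem_filter.mpr ⟨hu, h1, h2⟩)
    have hle := Finset.card_le_card hsub
    have h1 := Finset.card_union_le Qs ((Q.filter (fun x => G.Adj a x)) ∪ (Q.filter (fun x => G.Adj b x)))
    have h2 := Finset.card_union_le (Q.filter (fun x => G.Adj a x)) (Q.filter (fun x => G.Adj b x))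
    have hda := hdeg a haQ
    have hdb := hdeg b hbQ
    omega
  set k : ℕ := 2 * m ^ 2 + m + 4 with hkdef
  -- greedy selection of a generic family
  have greedy : ∀ n (R : Finset V), R ⊆ Qs → n * (2 * m + 1) ≤ R.card →
      ∃ f g h : ℕ → V,
        (∀ i, i < n → f i ∈ R ∧ f i ∈ Qs ∧ g i ∉ Q ∧ h i ∉ Q ∧ G.Adj (g i) (f i) ∧
          G.Adj (g i) a ∧ G.Adj (h i) (f i) ∧ G.Adj (h i) b) ∧
        (∀ i j, i < j → j < n → f i ≠ f j ∧ ¬ G.Adj (g i) (f j) ∧ ¬ G.Adj (h i) (f j)) := by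
    intro n
    induction n with
    | zero =>
      intro R _ _
      exact ⟨fun _ => a, fun _ => a, fun _ => a, fun i hi => absurd hi (by omega),
        fun i j _ hj => absurd hj (by omega)⟩
    | succ n ih =>
      intro R hR hcard
      have hRne : R.Nonempty := by
        rw [← Finset.card_pos]
        have : 1 ≤ (n + 1) * (2 * m + 1) := Nat.mul_pos (by omega) (by omega)
        omega
      obtain ⟨u, huR⟩ := hRne
      have huQs := hR huR
      have huQs' := Finset.mem_filter.mp huQs
      have huQ : u ∈ Q := huQs'.1
      obtain ⟨hnau, hnbu⟩ := huQs'.2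
      obtain ⟨s, hsQ, hsu, hsa⟩ := hsigma u huQ hnau
      obtain ⟨t, htQ, htu, htb⟩ := htau u huQ hnbu
      set X : Finset V := insert u ((Q.filter (fun x => G.Adj s x)) ∪
        (Q.filter (fun x => G.Adj t x))) with hXdef
      set R' : Finset V := R \ X with hR'def
      have hXcard : X.card ≤ 2 * m + 1 := by
        rw [hXdef]
        have h1 := Finset.card_insert_le u ((Q.filter (fun x => G.Adj s x)) ∪
          (Q.filter (fun x => G.Adj t x)))
        have h2 := Finset.card_union_le (Q.filter (fun x => G.Adj s x))
          (Q.filter (fun x => G.Adj t x))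
        have hds := hdeg s hsQ
        have hdt := hdeg t htQ
        omega
      have hR'card : n * (2 * m + 1) ≤ R'.card := by
        rw [hR'def]
        have h1 := Finset.card_le_card_sdiff_add_card (s := R) (t := X)
        have h2 : (n + 1) * (2 * m + 1) = n * (2 * m + 1) + (2 * m + 1) := by ring
        omega
      obtain ⟨f', g', h', hprop', hgen'⟩ := ih R' ((Finset.sdiff_subset).trans hR) hR'card
      refine ⟨fun i => if i = 0 then u else f' (i - 1),
        fun i => if i = 0 then s else g' (i - 1),
        fun i => if i = 0 then t else h' (i - 1), ?_, ?_⟩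
      · intro i hi
        rcases Nat.eq_zero_or_pos i with rfl | hpos
        · simp only [if_pos rfl]
          exact ⟨huR, huQs, hsQ, htQ, hsu, hsa, htu, htb⟩
        · have hi0 : i ≠ 0 := by omega
          simp only [if_neg hi0]
          obtain ⟨hfR', hrest⟩ := hprop' (i - 1) (by omega)
          exact ⟨(Finset.mem_sdiff.mp hfR').1, hrest⟩
      · intro i j hij hj
        have hj0 : j ≠ 0 := by omega
        rcases Nat.eq_zero_or_pos i with rfl | hpos
        · simp only [if_pos rfl, if_neg hj0]
          obtain ⟨hfR', hfQs', _, _, _, _, _, _⟩ := hprop' (j - 1) (by omega)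
          have hfX := (Finset.mem_sdiff.mp hfR').2
          have hfQ : f' (j - 1) ∈ Q := (Finset.mem_filter.mp hfQs').1
          refine ⟨?_, ?_, ?_⟩
          · intro h
            exact hfX (h ▸ Finset.mem_insert_self u _)
          · intro h
            exact hfX (Finset.mem_insert_of_mem (Finset.mem_union_left _
              (Finset.mem_filter.mpr ⟨hfQ, h⟩)))
          · intro h
            exact hfX (Finset.mem_insert_of_mem (Finset.mem_union_right _
              (Finset.mem_filter.mpr ⟨hfQ, h⟩)))
        · have hi0 : i ≠ 0 := by omega
          simp only [if_neg hi0, if_neg hj0]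
          exact hgen' (i - 1) (j - 1) (by omega) (by omega)
  -- apply the greedy lemma
  have hkQs : k * (2 * m + 1) ≤ Qs.card := by
    rw [hkdef]
    have := arith3 (p := p) (m := m) hm
    omega
  obtain ⟨f, g, h, hprop, hgen⟩ := greedy k Qs (Finset.Subset.refl Qs) hkQs
  have hfQs : ∀ i, i < k → f i ∈ Qs := fun i hi => (hprop i hi).2.1
  have hfQ : ∀ i, i < k → f i ∈ Q := fun i hi =>
    (Finset.mem_filter.mp (hfQs i hi)).1
  have hfa : ∀ i, i < k → ¬ G.Adj a (f i) := fun i hi =>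
    (Finset.mem_filter.mp (hfQs i hi)).2.1
  have hfb : ∀ i, i < k → ¬ G.Adj b (f i) := fun i hi =>
    (Finset.mem_filter.mp (hfQs i hi)).2.2
  have hgQ : ∀ i, i < k → g i ∉ Q := fun i hi => (hprop i hi).2.2.1
  have hhQ : ∀ i, i < k → h i ∉ Q := fun i hi => (hprop i hi).2.2.2.1
  have hgf : ∀ i, i < k → G.Adj (g i) (f i) := fun i hi => (hprop i hi).2.2.2.2.1
  have hga : ∀ i, i < k → G.Adj (g i) a := fun i hi => (hprop i hi).2.2.2.2.2.1
  have hhf : ∀ i, i < k → G.Adj (h i) (f i) := fun i hi => (hprop i hi).2.2.2.2.2.2.1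
  have hhb : ∀ i, i < k → G.Adj (h i) b := fun i hi => (hprop i hi).2.2.2.2.2.2.2
  have hk1 : k - 1 < k := by omega
  -- the a-connectors of distinct generic vertices are pairwise adjacent
  have scliq : ∀ i j, i < j → j < k - 1 → g i ≠ g j → G.Adj (g i) (g j) := by
    intro i j hij hjk hne
    by_contra hna
    have hik : i < k := by omega
    have hjk' : j < k := by omega
    have hil : i < k - 1 := by omega
    exact noP5 hP5 (hga i hik) ((hga j hjk').symm) (hgf j hjk')
      (hQ (Finset.mem_coe.mpr (hfQ j hjk')) (Finset.mem_coe.mpr (hfQ (k-1) hk1))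
        (hgen j (k-1) hjk hk1).1)
      hna ((hgen i j hij hjk').2.1) ((hgen i (k-1) hil hk1).2.1)
      (hfa j hjk') (hfa (k-1) hk1) ((hgen j (k-1) hjk hk1).2.1)
      hne (fun hh => hgQ i hik (hh ▸ hfQ j hjk')) (fun hh => hgQ i hik (hh ▸ hfQ (k-1) hk1))
      (fun hh => haQ (hh ▸ hfQ j hjk')) (fun hh => haQ (hh ▸ hfQ (k-1) hk1))
      (fun hh => hgQ j hjk' (hh ▸ hfQ (k-1) hk1))
  have tcliq : ∀ i j, i < j → j < k - 1 → h i ≠ h j → G.Adj (h i) (h j) := by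
    intro i j hij hjk hne
    by_contra hna
    have hik : i < k := by omega
    have hjk' : j < k := by omega
    have hil : i < k - 1 := by omega
    exact noP5 hP5 (hhb i hik) ((hhb j hjk').symm) (hhf j hjk')
      (hQ (Finset.mem_coe.mpr (hfQ j hjk')) (Finset.mem_coe.mpr (hfQ (k-1) hk1))
        (hgen j (k-1) hjk hk1).1)
      hna ((hgen i j hij hjk').2.2) ((hgen i (k-1) hil hk1).2.2)
      (hfb j hjk') (hfb (k-1) hk1) ((hgen j (k-1) hjk hk1).2.2)
      hne (fun hh => hhQ i hik (hh ▸ hfQ j hjk')) (fun hh => hhQ i hik (hh ▸ hfQ (k-1) hk1))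
      (fun hh => hbQ (hh ▸ hfQ j hjk')) (fun hh => hbQ (hh ▸ hfQ (k-1) hk1))
      (fun hh => hhQ j hjk' (hh ▸ hfQ (k-1) hk1))
  -- counting via fibers
  have finj : ∀ (X : Finset ℕ), X ⊆ Finset.range k → Set.InjOn f X := by
    intro X hX i hi j hj hfij
    have hik := Finset.mem_range.mp (hX hi)
    have hjk := Finset.mem_range.mp (hX hj)
    by_contra hij
    rcases Nat.lt_or_ge i j with hlt | hge
    · exact (hgen i j hlt hjk).1 hfij
    · have : j < i := by omega
      exact (hgen j i this hik).1 hfij.symm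
  have fib : ∀ (X : Finset ℕ) (gg : ℕ → V), X ⊆ Finset.range k →
      (∀ i, i < k → gg i ∉ Q ∧ G.Adj (gg i) (f i)) →
      X.card ≤ m * (X.image gg).card := by
    intro X gg hX hgg
    refine Finset.card_le_mul_card_image X m ?_
    intro v hv
    obtain ⟨i0, hi0X, hi0v⟩ := Finset.mem_image.mp hv
    have hi0k := Finset.mem_range.mp (hX hi0X)
    have hvQ : v ∉ Q := hi0v ▸ (hgg i0 hi0k).1
    set F : Finset ℕ := X.filter (fun i => gg i = v) with hFdef
    have hFX : F ⊆ X := Finset.filter_subset _ _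
    have hcard : F.card = (F.image f).card :=
      (Finset.card_image_of_injOn ((finj X hX).mono (by exact_mod_cast hFX))).symm
    have hsub : F.image f ⊆ Q.filter (fun x => G.Adj v x) := by
      intro x hx
      obtain ⟨i, hiF, rfl⟩ := Finset.mem_image.mp hx
      have hiF' := Finset.mem_filter.mp hiF
      have hik := Finset.mem_range.mp (hX (hFX hiF))
      refine Finset.mem_filter.mpr ⟨hfQ i hik, ?_⟩
      rw [← hiF'.2]
      exact (hgg i hik).2
    calc F.card = (F.image f).card := hcard
      _ ≤ (Q.filter (fun x => G.Adj v x)).card := Finset.card_le_card hsub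
      _ ≤ m := hdeg v hvQ
  -- the set of indices whose a-connector sees b
  set Sb : Finset ℕ := (Finset.range (k-1)).filter (fun i => G.Adj (g i) b) with hSbdef
  have hSbrange : Sb ⊆ Finset.range k :=
    (Finset.filter_subset _ _).trans (Finset.range_subset_range.mpr (by omega))
  by_cases hA : m + 1 ≤ (Sb.image g).card
  · -- Case A : enough a-connectors adjacent to b ⇒ K_p - e on (a, b)
    obtain ⟨K, hKsub, hKcard⟩ := Finset.exists_subset_card_eq (n := m + 1) hA
    refine noKpe hp hKpe K (by omega) ?_ ?_ ?_ hab hne_ab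
    · intro x hx y hy hxy
      obtain ⟨i, hiSb, rfl⟩ := Finset.mem_image.mp (hKsub hx)
      obtain ⟨j, hjSb, rfl⟩ := Finset.mem_image.mp (hKsub hy)
      have hi' := Finset.mem_filter.mp hiSb
      have hj' := Finset.mem_filter.mp hjSb
      have hik1 := Finset.mem_range.mp hi'.1
      have hjk1 := Finset.mem_range.mp hj'.1
      rcases Nat.lt_trichotomy i j with hlt | heq | hgt
      · exact scliq i j hlt hjk1 hxy
      · exact absurd (heq ▸ rfl) hxy
      · exact (scliq j i hgt hik1 hxy.symm).symm
    · intro x hx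
      obtain ⟨i, hiSb, rfl⟩ := Finset.mem_image.mp (hKsub hx)
      have hik : i < k := Finset.mem_range.mp (hSbrange hiSb)
      exact (hga i hik).symm
    · intro x hx
      obtain ⟨i, hiSb, rfl⟩ := Finset.mem_image.mp (hKsub hx)
      exact ((Finset.mem_filter.mp hiSb).2).symm
  · -- Case B : few a-connectors see b
    push_neg at hA
    have hSbcard : Sb.card ≤ m * m := by
      have h1 := fib Sb g hSbrange (fun i hi => ⟨hgQ i hi, hgf i hi⟩)
      have h2 : m * (Sb.image g).card ≤ m * m := Nat.mul_le_mul_left m (by omega)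
      omega
    -- find a large index i0 whose a-connector misses b
    have hi0ex : ∃ i0, i0 ∈ (Finset.range (k-1)).filter (fun i => ¬ G.Adj (g i) b) ∧
        m ^ 2 + m + 1 ≤ i0 := by
      by_contra hcon
      push_neg at hcon
      have hsub : (Finset.range (k-1)).filter (fun i => ¬ G.Adj (g i) b) ⊆
          Finset.range (m ^ 2 + m + 1) := by
        intro i hi
        rw [Finset.mem_range]
        have := hcon i hi
        omega
      have h1 := Finset.card_le_card hsub
      rw [Finset.card_range] at h1
      have h2 := Finset.card_filter_add_card_filter_not (s := Finset.range (k-1))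
        (p := fun i => G.Adj (g i) b)
      rw [Finset.card_range] at h2
      rw [← hSbdef] at h2
      have hm2 : m * m = m ^ 2 := by ring
      have hk1' : k - 1 = 2 * m ^ 2 + m + 3 := by omega
      omega
    obtain ⟨i0, hi0mem, hi0big⟩ := hi0ex
    have hi0' := Finset.mem_filter.mp hi0mem
    have hi0k1 : i0 < k - 1 := Finset.mem_range.mp hi0'.1
    have hi0k : i0 < k := by omega
    have hi0b : ¬ G.Adj (g i0) b := hi0'.2
    -- the indices below i0 whose f-vertex is not adjacent to g i0
    set J : Finset ℕ := (Finset.range i0).filter (fun j => ¬ G.Adj (g i0) (f j)) with hJdef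
    have hJrange : J ⊆ Finset.range k :=
      (Finset.filter_subset _ _).trans (Finset.range_subset_range.mpr (by omega))
    have hJcard : m ^ 2 + 1 ≤ J.card := by
      set Jc : Finset ℕ := (Finset.range i0).filter (fun j => G.Adj (g i0) (f j)) with hJcdef
      have hJcrange : Jc ⊆ Finset.range k :=
        (Finset.filter_subset _ _).trans (Finset.range_subset_range.mpr (by omega))
      have hJccard : Jc.card ≤ m := by
        have hcard : Jc.card = (Jc.image f).card :=
          (Finset.card_image_of_injOn ((finj Jc hJcrange))).symm
        have hsub : Jc.image f ⊆ Q.filter (fun x => G.Adj (g i0) x) := by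
          intro x hx
          obtain ⟨j, hjJc, rfl⟩ := Finset.mem_image.mp hx
          have hj' := Finset.mem_filter.mp hjJc
          have hjk : j < k := Finset.mem_range.mp (hJcrange hjJc)
          exact Finset.mem_filter.mpr ⟨hfQ j hjk, hj'.2⟩
        have := hdeg (g i0) (hgQ i0 hi0k)
        have := Finset.card_le_card hsub
        omega
      have h2 := Finset.card_filter_add_card_filter_not (s := Finset.range i0)
        (p := fun j => G.Adj (g i0) (f j))
      rw [Finset.card_range] at h2
      rw [← hJdef, ← hJcdef] at h2
      omega
    -- each b-connector of an index in J is adjacent to g i0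
    have hts : ∀ j ∈ J, G.Adj (h j) (g i0) := by
      intro j hjJ
      have hj' := Finset.mem_filter.mp hjJ
      have hji0 : j < i0 := Finset.mem_range.mp hj'.1
      have hjk : j < k := by omega
      by_contra hna
      exact noP5 hP5 ((hhb j hjk).symm) (hhf j hjk)
        (hQ (Finset.mem_coe.mpr (hfQ j hjk)) (Finset.mem_coe.mpr (hfQ i0 hi0k))
          (hgen j i0 hji0 hi0k).1)
        ((hgf i0 hi0k).symm)
        (hfb j hjk) (hfb i0 hi0k) (fun hh => hi0b hh.symm)
        ((hgen j i0 hji0 hi0k).2.2) hna (fun hh => hj'.2 hh.symm)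
        (fun hh => hbQ (hh ▸ hfQ j hjk)) (fun hh => hbQ (hh ▸ hfQ i0 hi0k))
        (fun heq => hfb i0 hi0k (heq ▸ (hgf i0 hi0k)))
        (fun hh => hhQ j hjk (hh ▸ hfQ i0 hi0k))
        (fun heq => hi0b (heq ▸ hhb j hjk))
        (fun hh => hgQ i0 hi0k (hh ▸ hfQ j hjk))
    -- the b-connectors over J form a clique adjacent to both g i0 and b
    set T : Finset V := J.image h with hTdef
    have hTcard : m + 1 ≤ T.card := by
      have h1 := fib J h hJrange (fun i hi => ⟨hhQ i hi, hhf i hi⟩)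
      rw [← hTdef] at h1
      by_contra hcon
      push_neg at hcon
      have h2 : m * T.card ≤ m * m := Nat.mul_le_mul_left m (by omega)
      have hm2 : m * m = m ^ 2 := by ring
      omega
    obtain ⟨K, hKsub, hKcard⟩ := Finset.exists_subset_card_eq (s := T) (n := m + 1) hTcard
    refine noKpe hp hKpe K (by omega) ?_ ?_ ?_ hi0b
      (fun heq => hfb i0 hi0k (heq ▸ (hgf i0 hi0k)))
    · intro x hx y hy hxy
      obtain ⟨i, hiJ, rfl⟩ := Finset.mem_image.mp (hKsub hx)
      obtain ⟨j, hjJ, rfl⟩ := Finset.mem_image.mp (hKsub hy)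
      have hik1 : i < k - 1 := by
        have := Finset.mem_range.mp (Finset.mem_filter.mp hiJ).1
        omega
      have hjk1 : j < k - 1 := by
        have := Finset.mem_range.mp (Finset.mem_filter.mp hjJ).1
        omega
      rcases Nat.lt_trichotomy i j with hlt | heq | hgt
      · exact tcliq i j hlt hjk1 hxy
      · exact absurd (heq ▸ rfl) hxy
      · exact (tcliq j i hgt hik1 hxy.symm).symm
    · intro x hx
      obtain ⟨j, hjJ, rfl⟩ := Finset.mem_image.mp (hKsub hx)
      exact (hts j hjJ).symm
    · intro x hx
      obtain ⟨j, hjJ, rfl⟩ := Finset.mem_image.mp (hKsub hx)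
      have hjk : j < k := Finset.mem_range.mp (hJrange hjJ)
      exact (hhb j hjk).symm
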